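/- arXiv:2602.01522 — 2 statements merged into one kernel-verified Lean document; each statement's English description precedes it below -/
import Mathlib

section
/- Let d ≥ 2, let u be a fixed unit vector in ℝ^d, and let b be a random vector distributed according to the uniform probability measure on the unit sphere S^{d-1}. Then for every ε > 0, the probability that |⟨u, b⟩| exceeds ε satisfies P(|⟨u, b⟩| > ε) ≤ 2 · exp(−(d−1)ε²/2). -/
set_option maxHeartbeats 1000000


open MeasureTheory Metric
open scoped RealInnerProductSpace Pointwise ENNReal

/-- The uniform probability measure on the unit sphere `S^{d-1} ⊆ ℝ^d`:
the rotation-invariant surface (cone) measure induced by Lebesgue measure,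
normalized to be a probability measure. -/
noncomputable def uniformSphere (d : ℕ) :
    Measure (sphere (0 : EuclideanSpace ℝ (Fin d)) 1) :=
  ((volume : Measure (EuclideanSpace ℝ (Fin d))).toSphere Set.univ)⁻¹ •
    (volume : Measure (EuclideanSpace ℝ (Fin d))).toSphere

lemma cap_cone_subset (d : ℕ) (u : EuclideanSpace ℝ (Fin d)) (hu : ‖u‖ = 1)
    (ε : ℝ) (hε : 0 < ε) (hε1 : ε < 1) :
    ∃ c : ℝ, (Set.Ioo (0:ℝ) 1) •
        ((↑) '' {b : sphere (0 : EuclideanSpace ℝ (Fin d)) 1 |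
          ε < ⟪u, (b : EuclideanSpace ℝ (Fin d))⟫})
      ⊆ Metric.closedBall (c • u) (Real.exp (-(ε^2)/2)) := by
  set c : ℝ := if ε^2 ≤ 1/2 then ε else 1/(2*ε) with hc
  refine ⟨c, ?_⟩
  rintro x hx
  rcases Set.mem_smul.1 hx with ⟨t, ht, v, hv, rfl⟩
  obtain ⟨b, hbS, rfl⟩ := hv
  have hvnorm : ‖(b : EuclideanSpace ℝ (Fin d))‖ = 1 := norm_eq_of_mem_sphere b
  set v : EuclideanSpace ℝ (Fin d) := (b : EuclideanSpace ℝ (Fin d))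
  have hiv : ε < ⟪u, v⟫ := hbS
  have ht0 : 0 < t := ht.1
  have ht1 : t < 1 := ht.2
  have hcpos : 0 < c := by
    rw [hc]; split_ifs
    · exact hε
    · positivity
  have hn : ‖t • v - c • u‖^2 = t^2 - 2*(t*(c*⟪u, v⟫)) + c^2 := by
    rw [norm_sub_sq_real, real_inner_smul_left, real_inner_smul_right, norm_smul, norm_smul,
      real_inner_comm v u, hvnorm, hu]
    rw [Real.norm_eq_abs, Real.norm_eq_abs, abs_of_pos ht0, abs_of_pos hcpos]
    ring
  have key : ‖t • v - c • u‖^2 ≤ Real.exp (-(ε^2)) := by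
    rw [hn]
    have hexp1 : -(ε^2) + 1 ≤ Real.exp (-(ε^2)) := Real.add_one_le_exp _
    by_cases hA : ε^2 ≤ 1/2
    · rw [hc, if_pos hA]
      have h3 : t*ε*ε ≤ t*ε*⟪u, v⟫ :=
        mul_le_mul_of_nonneg_left hiv.le (by positivity)
      have h4 : 0 ≤ (1-t)*(1+t-2*ε^2) := by nlinarith
      nlinarith
    · rw [hc, if_neg hA]
      push_neg at hA
      have hhalf : (0:ℝ) < 1 - ε^2/2 := by nlinarith
      have e1 : 1 - ε^2/2 ≤ Real.exp (-(ε^2/2)) := by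
        have := Real.add_one_le_exp (-(ε^2/2)); linarith
      have e2 : Real.exp (ε^2/2) * (1 - ε^2/2) ≤ 1 := by
        calc Real.exp (ε^2/2) * (1 - ε^2/2) ≤ Real.exp (ε^2/2) * Real.exp (-(ε^2/2)) :=
              mul_le_mul_of_nonneg_left e1 (Real.exp_pos _).le
          _ = 1 := by rw [← Real.exp_add]; ring_nf; exact Real.exp_zero
      have e3 : 1 ≤ 2*ε*(1 - ε^2/2) := by
        have h4 : 0 ≤ (1-ε)*(ε^2+ε-1) := by
          apply mul_nonneg (by linarith)
          nlinarith
        nlinarith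
      have key2 : Real.exp (ε^2/2) ≤ 2*ε := by nlinarith [Real.exp_pos (ε^2/2)]
      have key3 : Real.exp (ε^2) ≤ 4*ε^2 := by
        have h5 : Real.exp (ε^2) = Real.exp (ε^2/2) * Real.exp (ε^2/2) := by
          rw [← Real.exp_add]; ring_nf
        rw [h5]; nlinarith [Real.exp_pos (ε^2/2)]
      have h6 : Real.exp (-(ε^2)) * Real.exp (ε^2) = 1 := by
        rw [← Real.exp_add]; simp
      have key4 : 1/(4*ε^2) ≤ Real.exp (-(ε^2)) := by
        rw [div_le_iff₀ (by positivity)]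
        nlinarith [mul_le_mul_of_nonneg_left key3 (Real.exp_pos (-(ε^2))).le]
      have h7 : t*((1/(2*ε))*ε) ≤ t*((1/(2*ε))*⟪u, v⟫) := by
        rw [mul_comm (1/(2*ε)) ε, mul_comm (1/(2*ε)) (⟪u, v⟫), ← mul_assoc, ← mul_assoc]
        exact mul_le_mul_of_nonneg_right (mul_le_mul_of_nonneg_left hiv.le ht0.le)
          (by positivity)
      have h8 : (1/(2*ε))*ε = 1/2 := by field_simp
      have h9 : (1/(2*ε))^2 = 1/(4*ε^2) := by field_simp; ring
      rw [h9]
      rw [h8] at h7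
      have h10 : t^2 - 2*(t*((1/(2*ε))*⟪u, v⟫)) + 1/(4*ε^2)
          ≤ t^2 - t + 1/(4*ε^2) := by nlinarith [h7]
      have h11 : t^2 - t ≤ 0 := by nlinarith [mul_nonneg (sub_nonneg.2 ht1.le) ht0.le]
      linarith [key4]
  have hρ : (Real.exp (-(ε^2)/2))^2 = Real.exp (-(ε^2)) := by
    rw [sq, ← Real.exp_add]; congr 1; ring
  rw [Metric.mem_closedBall, dist_eq_norm]
  calc ‖t • v - c • u‖ = Real.sqrt (‖t • v - c • u‖^2) :=
        (Real.sqrt_sq (norm_nonneg _)).symm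
    _ ≤ Real.sqrt ((Real.exp (-(ε^2)/2))^2) := Real.sqrt_le_sqrt (by rw [hρ]; exact key)
    _ = Real.exp (-(ε^2)/2) := Real.sqrt_sq (Real.exp_pos _).le

lemma cap_bound (d : ℕ) (hd : 2 ≤ d) (u : EuclideanSpace ℝ (Fin d)) (hu : ‖u‖ = 1)
    (ε : ℝ) (hε : 0 < ε) :
    uniformSphere d
        {b : sphere (0 : EuclideanSpace ℝ (Fin d)) 1 |
          ε < ⟪u, (b : EuclideanSpace ℝ (Fin d))⟫}
      ≤ ENNReal.ofReal (Real.exp (-(((d : ℝ) - 1) * ε ^ 2) / 2)) := by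
  set S := {b : sphere (0 : EuclideanSpace ℝ (Fin d)) 1 |
    ε < ⟪u, (b : EuclideanSpace ℝ (Fin d))⟫} with hS
  by_cases h1 : 1 ≤ ε
  · have : S = ∅ := by
      ext b
      simp only [hS, Set.mem_setOf_eq, Set.mem_empty_iff_false, iff_false, not_lt]
      calc ⟪u, (b : EuclideanSpace ℝ (Fin d))⟫ ≤ ‖u‖ * ‖(b : EuclideanSpace ℝ (Fin d))‖ :=
            real_inner_le_norm _ _
        _ = 1 := by rw [hu, norm_eq_of_mem_sphere b, mul_one]
        _ ≤ ε := h1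
    rw [this]
    simp
  · push_neg at h1
    obtain ⟨c, hsub⟩ := cap_cone_subset d u hu ε hε h1
    have hSm : MeasurableSet S := by
      have : IsOpen S := isOpen_lt continuous_const
        (Continuous.inner continuous_const continuous_subtype_val)
      exact this.measurableSet
    have hfr : Module.finrank ℝ (EuclideanSpace ℝ (Fin d)) = d := finrank_euclideanSpace_fin
    have vball_pos : (0:ℝ≥0∞) < volume (ball (0 : EuclideanSpace ℝ (Fin d)) 1) :=
      measure_ball_pos _ _ one_pos
    have vball_lt : volume (ball (0 : EuclideanSpace ℝ (Fin d)) 1) < ⊤ := measure_ball_lt_top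
    set K := (volume : Measure (EuclideanSpace ℝ (Fin d))).toSphere Set.univ with hK
    have hKval : K = (d : ℝ≥0∞) * volume (ball (0 : EuclideanSpace ℝ (Fin d)) 1) := by
      rw [hK, Measure.toSphere_apply_univ, hfr]
    have hK0 : K ≠ 0 := by
      rw [hKval]
      exact mul_ne_zero (Nat.cast_ne_zero.2 (by omega)) vball_pos.ne'
    have hKt : K ≠ ⊤ := by
      rw [hKval]
      exact ENNReal.mul_ne_top (ENNReal.natCast_ne_top d) vball_lt.ne
    have hTS : (volume : Measure (EuclideanSpace ℝ (Fin d))).toSphere S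
        ≤ ENNReal.ofReal ((Real.exp (-(ε^2)/2))^d) * K := by
      rw [Measure.toSphere_apply' _ hSm, hKval, hfr]
      have hmono : volume (Set.Ioo (0:ℝ) 1 • (Subtype.val '' S))
          ≤ volume (Metric.closedBall (c • u) (Real.exp (-(ε^2)/2))) := measure_mono hsub
      rw [Measure.addHaar_closedBall _ _ (Real.exp_pos _).le, hfr] at hmono
      calc (d : ℝ≥0∞) * volume (Set.Ioo (0:ℝ) 1 • (Subtype.val '' S))
          ≤ (d : ℝ≥0∞) * (ENNReal.ofReal ((Real.exp (-(ε^2)/2))^d) *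
              volume (ball (0 : EuclideanSpace ℝ (Fin d)) 1)) := mul_le_mul_right hmono _
        _ = ENNReal.ofReal ((Real.exp (-(ε^2)/2))^d) *
              ((d : ℝ≥0∞) * volume (ball (0 : EuclideanSpace ℝ (Fin d)) 1)) := by
            rw [← mul_assoc, ← mul_assoc, mul_comm ((d : ℝ≥0∞)) _]
    have hmain : uniformSphere d S ≤ ENNReal.ofReal ((Real.exp (-(ε^2)/2))^d) := by
      have : uniformSphere d S = K⁻¹ * (volume : Measure (EuclideanSpace ℝ (Fin d))).toSphere S := by
        rw [uniformSphere, Measure.smul_apply, smul_eq_mul]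
      rw [this]
      calc K⁻¹ * (volume : Measure (EuclideanSpace ℝ (Fin d))).toSphere S
          ≤ K⁻¹ * (ENNReal.ofReal ((Real.exp (-(ε^2)/2))^d) * K) := mul_le_mul_right hTS _
        _ = ENNReal.ofReal ((Real.exp (-(ε^2)/2))^d) * (K⁻¹ * K) := by
            rw [← mul_assoc, mul_comm K⁻¹ _, mul_assoc]
        _ = ENNReal.ofReal ((Real.exp (-(ε^2)/2))^d) := by
            rw [ENNReal.inv_mul_cancel hK0 hKt, mul_one]
    refine hmain.trans (ENNReal.ofReal_le_ofReal ?_)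
    rw [← Real.exp_nat_mul]
    apply Real.exp_le_exp.2
    have hd1 : (2:ℝ) ≤ (d:ℝ) := by exact_mod_cast hd
    nlinarith [sq_nonneg ε]

/-- Concentration of random directions: if `u` is a fixed unit vector in `ℝ^d` (`d ≥ 2`)
and `b` is uniformly distributed on the unit sphere, then for every `ε > 0`,
`P(|⟪u, b⟫| > ε) ≤ 2 * exp (-(d-1) * ε² / 2)`. -/
theorem concentration_inner_uniformSphere
    (d : ℕ) (hd : 2 ≤ d) (u : EuclideanSpace ℝ (Fin d)) (hu : ‖u‖ = 1)
    (ε : ℝ) (hε : 0 < ε) :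
    uniformSphere d
        {b : sphere (0 : EuclideanSpace ℝ (Fin d)) 1 |
          ε < |⟪u, (b : EuclideanSpace ℝ (Fin d))⟫|}
      ≤ ENNReal.ofReal (2 * Real.exp (-(((d : ℝ) - 1) * ε ^ 2) / 2)) := by
  have h1 := cap_bound d hd u hu ε hε
  have h2 := cap_bound d hd (-u) (by rw [norm_neg, hu]) ε hε
  have hsub : {b : sphere (0 : EuclideanSpace ℝ (Fin d)) 1 |
        ε < |⟪u, (b : EuclideanSpace ℝ (Fin d))⟫|}
      ⊆ {b : sphere (0 : EuclideanSpace ℝ (Fin d)) 1 |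
          ε < ⟪u, (b : EuclideanSpace ℝ (Fin d))⟫}
        ∪ {b : sphere (0 : EuclideanSpace ℝ (Fin d)) 1 |
          ε < ⟪-u, (b : EuclideanSpace ℝ (Fin d))⟫} := by
    intro b hb
    simp only [Set.mem_setOf_eq] at hb
    rcases lt_abs.1 hb with h | h
    · exact Or.inl h
    · refine Or.inr ?_
      simpa [inner_neg_left] using h
  calc uniformSphere d {b : sphere (0 : EuclideanSpace ℝ (Fin d)) 1 |
        ε < |⟪u, (b : EuclideanSpace ℝ (Fin d))⟫|}
      ≤ uniformSphere d ({b : sphere (0 : EuclideanSpace ℝ (Fin d)) 1 |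
          ε < ⟪u, (b : EuclideanSpace ℝ (Fin d))⟫}
        ∪ {b : sphere (0 : EuclideanSpace ℝ (Fin d)) 1 |
          ε < ⟪-u, (b : EuclideanSpace ℝ (Fin d))⟫}) := measure_mono hsub
    _ ≤ _ + _ := measure_union_le _ _
    _ ≤ ENNReal.ofReal (Real.exp (-(((d : ℝ) - 1) * ε ^ 2) / 2))
        + ENNReal.ofReal (Real.exp (-(((d : ℝ) - 1) * ε ^ 2) / 2)) := add_le_add h1 h2
    _ = ENNReal.ofReal (2 * Real.exp (-(((d : ℝ) - 1) * ε ^ 2) / 2)) := by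
        rw [← ENNReal.ofReal_add (Real.exp_pos _).le (Real.exp_pos _).le]
        ring_nf
end

section
/- Let d ≥ 1, μ, g ∈ ℝ^d, σ > 0, and let M : ℝ^d → ℝ^d be a linear map. Let Z and Z′ be independent random vectors in ℝ^d whose coordinates are independent and each distributed N(0, σ²) (i.e., each has the real Gaussian law with mean 0 and variance σ²), and set X = μ + Z and Y = μ + g + Z′. Then E[‖X + M X − Y‖²] = ‖Mμ − g‖² + σ²·‖I + M‖_F² + d·σ², where ‖·‖_F denotes the Frobenius norm (so ‖I + M‖_F² is the sum of the squares of all entries of the matrix of I + M in the standard basis). -/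
open MeasureTheory ProbabilityTheory
open Real Set

instance myGaussProb (m : ℝ) (v : {r : ℝ // 0 ≤ r}) : IsProbabilityMeasure (gaussianReal m v) :=
  instIsProbabilityMeasureGaussianReal m v



lemma my_integral_mul_exp_eq_zero {b : ℝ} (hb : 0 < b) :
    ∫ x : ℝ, x * rexp (-b * x ^ 2) = 0 := by
  have hint := integrable_mul_exp_neg_mul_sq hb
  have key : ∫ x in Iic (0:ℝ), x * rexp (-b * x ^ 2)
      = - ∫ x in Ioi (0:ℝ), x * rexp (-b * x ^ 2) := by
    have h := integral_comp_neg_Iic (0:ℝ) (fun x => x * rexp (-b * x ^ 2))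
    simp only [neg_zero] at h
    have h2 : ∫ x in Iic (0:ℝ), (-x) * rexp (-b * (-x) ^ 2)
        = - ∫ x in Iic (0:ℝ), x * rexp (-b * x ^ 2) := by
      rw [← integral_neg]
      refine setIntegral_congr_fun measurableSet_Iic fun x _ => ?_
      have hx : (-x : ℝ) ^ 2 = x ^ 2 := by ring
      rw [hx]; ring
    rw [h2] at h
    linarith
  rw [← intervalIntegral.integral_Iic_add_Ioi hint.integrableOn hint.integrableOn, key]
  ring

lemma my_integral_sq_mul_exp {b : ℝ} (hb : 0 < b) :
    ∫ x : ℝ, x ^ 2 * rexp (-b * x ^ 2) = b ^ (-(3:ℝ)/2) * (1/2) * √π := by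
  have h1 : ∫ x : ℝ, x ^ 2 * rexp (-b * x ^ 2)
      = 2 * ∫ x in Ioi (0:ℝ), x ^ 2 * rexp (-b * x ^ 2) := by
    rw [← integral_comp_abs (f := fun x => x ^ 2 * rexp (-b * x ^ 2))]
    congr 1 with x
    rw [sq_abs]
  have h2 : ∫ x in Ioi (0:ℝ), x ^ 2 * rexp (-b * x ^ 2)
      = ∫ x in Ioi (0:ℝ), x ^ (2:ℝ) * rexp (-b * x ^ (2:ℝ)) := by
    refine setIntegral_congr_fun measurableSet_Ioi fun x hx => ?_
    rw [show ((2:ℝ)) = ((2:ℕ):ℝ) by norm_num, Real.rpow_natCast]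
  rw [h1, h2, integral_rpow_mul_exp_neg_mul_rpow (by norm_num) (by norm_num) hb]
  rw [show ((2:ℝ)+1)/2 = 1/2 + 1 by norm_num, Real.Gamma_add_one (by norm_num),
    Real.Gamma_one_half_eq]
  rw [show (-((2:ℝ)+1)/2) = -(3:ℝ)/2 by norm_num]
  ring

section OneD
variable {σ : ℝ}

lemma myv_ne_zero (hσ : 0 < σ) : (⟨σ^2, sq_nonneg σ⟩ : NNReal) ≠ 0 := by
  intro h
  have : σ ^ 2 = 0 := congrArg NNReal.toReal h
  exact (pow_pos hσ 2).ne' this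

lemma my_pdf_eq (hσ : 0 < σ) : gaussianPDFReal 0 ⟨σ^2, sq_nonneg σ⟩
    = fun x => (√(2*π*σ^2))⁻¹ * rexp (-(2*σ^2)⁻¹ * x^2) := by
  funext x
  simp only [gaussianPDFReal, NNReal.coe_mk, sub_zero]
  congr 1
  field_simp
  rfl

/-- transfer: integral against the gaussian measure equals integral of pdf * g. -/
lemma my_integral_gaussian (hσ : 0 < σ) (g : ℝ → ℝ) :
    ∫ x, g x ∂(gaussianReal 0 ⟨σ^2, sq_nonneg σ⟩)
      = ∫ x, gaussianPDFReal 0 ⟨σ^2, sq_nonneg σ⟩ x * g x := by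
  rw [gaussianReal_of_var_ne_zero 0 (myv_ne_zero hσ)]
  have hmeas : Measurable fun x => Real.toNNReal (gaussianPDFReal 0 ⟨σ^2, sq_nonneg σ⟩ x) :=
    (measurable_gaussianPDFReal 0 _).real_toNNReal
  rw [show gaussianPDF 0 (⟨σ^2, sq_nonneg σ⟩ : NNReal)
      = fun x => ((Real.toNNReal (gaussianPDFReal 0 ⟨σ^2, sq_nonneg σ⟩ x) : NNReal) : ENNReal)
      from rfl]
  rw [integral_withDensity_eq_integral_smul hmeas g]
  congr 1 with x
  rw [NNReal.smul_def, smul_eq_mul]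
  congr 1
  exact Real.coe_toNNReal _ (gaussianPDFReal_nonneg _ _ _)

lemma my_integrable_gaussian (hσ : 0 < σ) {g : ℝ → ℝ}
    (h : Integrable (fun x => gaussianPDFReal 0 ⟨σ^2, sq_nonneg σ⟩ x * g x) volume) :
    Integrable g (gaussianReal 0 ⟨σ^2, sq_nonneg σ⟩) := by
  rw [gaussianReal_of_var_ne_zero 0 (myv_ne_zero hσ)]
  have hmeas : Measurable fun x => Real.toNNReal (gaussianPDFReal 0 ⟨σ^2, sq_nonneg σ⟩ x) :=
    (measurable_gaussianPDFReal 0 _).real_toNNReal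
  rw [show gaussianPDF 0 (⟨σ^2, sq_nonneg σ⟩ : NNReal)
      = fun x => ((Real.toNNReal (gaussianPDFReal 0 ⟨σ^2, sq_nonneg σ⟩ x) : NNReal) : ENNReal)
      from rfl]
  rw [integrable_withDensity_iff_integrable_smul hmeas]
  refine h.congr (ae_of_all _ fun x => ?_)
  dsimp only
  rw [NNReal.smul_def, smul_eq_mul]
  congr 1
  exact (Real.coe_toNNReal _ (gaussianPDFReal_nonneg _ _ _)).symm

lemma hb_pos (hσ : 0 < σ) : 0 < (2*σ^2)⁻¹ := by positivity

lemma my_int_id (hσ : 0 < σ) : Integrable (fun x : ℝ => x) (gaussianReal 0 ⟨σ^2, sq_nonneg σ⟩) := by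
  refine my_integrable_gaussian hσ ?_
  rw [my_pdf_eq hσ]
  have : (fun x : ℝ => (√(2*π*σ^2))⁻¹ * rexp (-(2*σ^2)⁻¹ * x^2) * x)
      = fun x : ℝ => (√(2*π*σ^2))⁻¹ * (x * rexp (-(2*σ^2)⁻¹ * x^2)) := by
    funext x; ring
  rw [this]
  exact (integrable_mul_exp_neg_mul_sq (hb_pos hσ)).const_mul _

lemma my_integral_id (hσ : 0 < σ) : ∫ x, x ∂(gaussianReal 0 ⟨σ^2, sq_nonneg σ⟩) = 0 := by
  rw [my_integral_gaussian hσ, my_pdf_eq hσ]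
  have : (fun x : ℝ => (√(2*π*σ^2))⁻¹ * rexp (-(2*σ^2)⁻¹ * x^2) * x)
      = fun x : ℝ => (√(2*π*σ^2))⁻¹ * (x * rexp (-(2*σ^2)⁻¹ * x^2)) := by
    funext x; ring
  rw [this, integral_const_mul, my_integral_mul_exp_eq_zero (hb_pos hσ), mul_zero]

lemma my_int_sq (hσ : 0 < σ) :
    Integrable (fun x : ℝ => x ^ 2) (gaussianReal 0 ⟨σ^2, sq_nonneg σ⟩) := by
  refine my_integrable_gaussian hσ ?_
  rw [my_pdf_eq hσ]
  have : (fun x : ℝ => (√(2*π*σ^2))⁻¹ * rexp (-(2*σ^2)⁻¹ * x^2) * x ^ 2)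
      = fun x : ℝ => (√(2*π*σ^2))⁻¹ * (x ^ 2 * rexp (-(2*σ^2)⁻¹ * x^2)) := by
    funext x; ring
  rw [this]
  refine Integrable.const_mul ?_ _
  have h := integrable_rpow_mul_exp_neg_mul_sq (hb_pos hσ) (s := 2) (by norm_num)
  refine h.congr (ae_of_all _ fun x => ?_)
  dsimp only
  norm_cast

lemma my_integral_sq (hσ : 0 < σ) :
    ∫ x, x ^ 2 ∂(gaussianReal 0 ⟨σ^2, sq_nonneg σ⟩) = σ ^ 2 := by
  rw [my_integral_gaussian hσ, my_pdf_eq hσ]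
  have : (fun x : ℝ => (√(2*π*σ^2))⁻¹ * rexp (-(2*σ^2)⁻¹ * x^2) * x ^ 2)
      = fun x : ℝ => (√(2*π*σ^2))⁻¹ * (x ^ 2 * rexp (-(2*σ^2)⁻¹ * x^2)) := by
    funext x; ring
  rw [this, integral_const_mul, my_integral_sq_mul_exp (hb_pos hσ)]
  -- arithmetic
  have hA : (0:ℝ) < 2*σ^2 := by positivity
  have h1 : ((2*σ^2)⁻¹ : ℝ) ^ (-(3:ℝ)/2) = (2*σ^2) ^ ((3:ℝ)/2) := by
    rw [Real.inv_rpow hA.le, show (-(3:ℝ)/2) = -((3:ℝ)/2) by norm_num,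
      Real.rpow_neg hA.le, inv_inv]
  have h2 : ((2*σ^2):ℝ) ^ ((3:ℝ)/2) = (2*σ^2) * √(2*σ^2) := by
    rw [show ((3:ℝ)/2) = 1 + 1/2 by norm_num, Real.rpow_add hA, Real.rpow_one,
      ← Real.sqrt_eq_rpow]
  have h3 : √(2*π*σ^2) = √π * √(2*σ^2) := by
    rw [show 2*π*σ^2 = π * (2*σ^2) by ring, Real.sqrt_mul pi_pos.le]
  rw [h1, h2, h3]
  have hs : √(2*σ^2) ≠ 0 := by positivity
  have hp : √π ≠ 0 := by positivity
  field_simp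
end OneD

section Pi
variable {d : ℕ} {σ : ℝ}

/-- the coordinate moments of the product gaussian -/
lemma mypi_int_eval (hσ : 0 < σ) (j : Fin d) :
    Integrable (fun z : Fin d → ℝ => z j)
      (Measure.pi fun _ : Fin d => gaussianReal 0 ⟨σ^2, sq_nonneg σ⟩) := by
  letI : MeasureSpace ℝ := ⟨gaussianReal 0 ⟨σ^2, sq_nonneg σ⟩⟩
  haveI : IsProbabilityMeasure (volume : Measure ℝ) :=
    inferInstanceAs (IsProbabilityMeasure (gaussianReal 0 ⟨σ^2, sq_nonneg σ⟩))
  set f : Fin d → ℝ → ℝ := fun i => if i = j then (fun x => x) else (fun _ => 1) with hf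
  have hint : ∀ i, Integrable (f i) volume := by
    intro i
    by_cases h : i = j
    · simp only [hf, if_pos h]; exact my_int_id hσ
    · simp only [hf, if_neg h]; exact integrable_const 1
  have h := Integrable.fintype_prod (f := f) hint
  refine h.congr (ae_of_all _ fun z => ?_)
  dsimp only
  rw [Finset.prod_eq_single j (fun b _ hb => by simp [hf, hb]) (by simp)]
  simp [hf]

lemma mypi_integral_eval (hσ : 0 < σ) (j : Fin d) :
    ∫ z, z j ∂(Measure.pi fun _ : Fin d => gaussianReal 0 ⟨σ^2, sq_nonneg σ⟩) = 0 := by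
  letI : MeasureSpace ℝ := ⟨gaussianReal 0 ⟨σ^2, sq_nonneg σ⟩⟩
  haveI : IsProbabilityMeasure (volume : Measure ℝ) :=
    inferInstanceAs (IsProbabilityMeasure (gaussianReal 0 ⟨σ^2, sq_nonneg σ⟩))
  set f : Fin d → ℝ → ℝ := fun i => if i = j then (fun x => x) else (fun _ => 1) with hf
  have h1 : ∫ z, z j ∂(Measure.pi fun _ : Fin d => gaussianReal 0 ⟨σ^2, sq_nonneg σ⟩)
      = ∫ z : Fin d → ℝ, ∏ i, f i (z i) := by
    refine integral_congr_ae (ae_of_all _ fun z => ?_)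
    dsimp only
    rw [Finset.prod_eq_single j (fun b _ hb => by simp [hf, hb]) (by simp)]
    simp [hf]
  rw [h1, MeasureTheory.integral_fintype_prod_volume_eq_prod f]
  refine Finset.prod_eq_zero (Finset.mem_univ j) ?_
  simp only [hf, if_pos rfl]
  exact my_integral_id hσ

lemma mypi_int_mul (hσ : 0 < σ) (j k : Fin d) :
    Integrable (fun z : Fin d → ℝ => z j * z k)
      (Measure.pi fun _ : Fin d => gaussianReal 0 ⟨σ^2, sq_nonneg σ⟩) := by
  letI : MeasureSpace ℝ := ⟨gaussianReal 0 ⟨σ^2, sq_nonneg σ⟩⟩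
  haveI : IsProbabilityMeasure (volume : Measure ℝ) :=
    inferInstanceAs (IsProbabilityMeasure (gaussianReal 0 ⟨σ^2, sq_nonneg σ⟩))
  by_cases hjk : j = k
  · subst hjk
    set f : Fin d → ℝ → ℝ := fun i => if i = j then (fun x => x * x) else (fun _ => 1) with hf
    have hint : ∀ i, Integrable (f i) volume := by
      intro i
      by_cases h : i = j
      · simp only [hf, if_pos h]
        exact (my_int_sq hσ).congr (ae_of_all _ fun x => sq x)
      · simp only [hf, if_neg h]; exact integrable_const 1
    refine (Integrable.fintype_prod (f := f) hint).congr (ae_of_all _ fun z => ?_)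
    dsimp only
    rw [Finset.prod_eq_single j (fun b _ hb => by simp [hf, hb]) (by simp)]
    simp [hf]
  · set f : Fin d → ℝ → ℝ := fun i =>
      if i = j then (fun x => x) else if i = k then (fun x => x) else (fun _ => 1) with hf
    have hint : ∀ i, Integrable (f i) volume := by
      intro i
      by_cases h : i = j
      · simp only [hf, if_pos h]; exact my_int_id hσ
      · by_cases h' : i = k
        · simp only [hf, if_neg h, if_pos h']; exact my_int_id hσ
        · simp only [hf, if_neg h, if_neg h']; exact integrable_const 1
    refine (Integrable.fintype_prod (f := f) hint).congr (ae_of_all _ fun z => ?_)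
    have hkj : k ≠ j := fun h => hjk h.symm
    dsimp only
    rw [← Finset.mul_prod_erase Finset.univ _ (Finset.mem_univ j),
      ← Finset.mul_prod_erase _ _ (Finset.mem_erase.mpr ⟨hkj, Finset.mem_univ k⟩),
      Finset.prod_eq_one (fun i hi => ?_)]
    · simp only [hf, if_pos rfl, if_neg hkj]
      simp
    · rw [Finset.mem_erase, Finset.mem_erase] at hi
      simp [hf, hi.1, hi.2.1]

lemma mypi_integral_mul (hσ : 0 < σ) (j k : Fin d) :
    ∫ z, z j * z k ∂(Measure.pi fun _ : Fin d => gaussianReal 0 ⟨σ^2, sq_nonneg σ⟩)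
      = if j = k then σ ^ 2 else 0 := by
  letI : MeasureSpace ℝ := ⟨gaussianReal 0 ⟨σ^2, sq_nonneg σ⟩⟩
  haveI : IsProbabilityMeasure (volume : Measure ℝ) :=
    inferInstanceAs (IsProbabilityMeasure (gaussianReal 0 ⟨σ^2, sq_nonneg σ⟩))
  by_cases hjk : j = k
  · subst hjk
    simp only [if_pos rfl]
    set f : Fin d → ℝ → ℝ := fun i => if i = j then (fun x => x * x) else (fun _ => 1) with hf
    have h1 : ∫ z, z j * z j ∂(Measure.pi fun _ : Fin d => gaussianReal 0 ⟨σ^2, sq_nonneg σ⟩)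
        = ∫ z : Fin d → ℝ, ∏ i, f i (z i) := by
      refine integral_congr_ae (ae_of_all _ fun z => ?_)
      dsimp only
      rw [Finset.prod_eq_single j (fun b _ hb => by simp [hf, hb]) (by simp)]
      simp [hf]
    rw [h1, MeasureTheory.integral_fintype_prod_volume_eq_prod f]
    rw [Finset.prod_eq_single j (fun b _ hb => by simp [hf, hb]) (by simp)]
    simp only [hf, if_pos rfl]
    rw [show (∫ x : ℝ, x * x) = ∫ x : ℝ, x ^ 2 from by congr 1 with x; ring]
    exact my_integral_sq hσ
  · simp only [if_neg hjk]
    set f : Fin d → ℝ → ℝ := fun i =>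
      if i = j then (fun x => x) else if i = k then (fun x => x) else (fun _ => 1) with hf
    have hkj : k ≠ j := fun h => hjk h.symm
    have h1 : ∫ z, z j * z k ∂(Measure.pi fun _ : Fin d => gaussianReal 0 ⟨σ^2, sq_nonneg σ⟩)
        = ∫ z : Fin d → ℝ, ∏ i, f i (z i) := by
      refine integral_congr_ae (ae_of_all _ fun z => ?_)
      dsimp only
      rw [← Finset.mul_prod_erase Finset.univ _ (Finset.mem_univ j),
        ← Finset.mul_prod_erase _ _ (Finset.mem_erase.mpr ⟨hkj, Finset.mem_univ k⟩),
        Finset.prod_eq_one (fun i hi => ?_)]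
      · simp only [hf, if_pos rfl, if_neg hkj]
        simp
      · rw [Finset.mem_erase, Finset.mem_erase] at hi
        simp [hf, hi.1, hi.2.1]
    rw [h1, MeasureTheory.integral_fintype_prod_volume_eq_prod f]
    refine Finset.prod_eq_zero (Finset.mem_univ j) ?_
    simp only [hf, if_pos rfl]
    exact my_integral_id hσ

end Pi

section ProdHelp
variable {X Y : Type*} [MeasurableSpace X] [MeasurableSpace Y]
  {μ : Measure X} {ρ : Measure Y} [IsProbabilityMeasure μ] [IsProbabilityMeasure ρ]

lemma my_int_fst {f : X → ℝ} (hf : Integrable f μ) :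
    Integrable (fun q : X × Y => f q.1) (μ.prod ρ) := by
  simpa using hf.mul_prod (integrable_const (1:ℝ))

lemma my_int_snd {f : Y → ℝ} (hf : Integrable f ρ) :
    Integrable (fun q : X × Y => f q.2) (μ.prod ρ) := by
  simpa using (integrable_const (1:ℝ)).mul_prod hf

lemma my_eq_fst (f : X → ℝ) : ∫ q, f q.1 ∂(μ.prod ρ) = ∫ x, f x ∂μ := by
  simpa using integral_prod_mul (μ := μ) (ν := ρ) f (fun _ => (1:ℝ))

lemma my_eq_snd (f : Y → ℝ) : ∫ q, f q.2 ∂(μ.prod ρ) = ∫ y, f y ∂ρ := by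
  simpa using integral_prod_mul (μ := μ) (ν := ρ) (fun _ => (1:ℝ)) f

end ProdHelp

section Key
variable {d : ℕ} {σ : ℝ}

section S
variable (hσ : 0 < σ) (a : Matrix (Fin d) (Fin d) ℝ) (c : EuclideanSpace ℝ (Fin d)) (i : Fin d)

include hσ in
lemma myS_int : Integrable (fun z : Fin d → ℝ => ∑ j, a i j * z j)
    (Measure.pi fun _ : Fin d => gaussianReal 0 ⟨σ^2, sq_nonneg σ⟩) :=
  integrable_finset_sum _ fun j _ => (mypi_int_eval hσ j).const_mul _

include hσ in
lemma myS_eq : ∫ z, (∑ j, a i j * z j)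
    ∂(Measure.pi fun _ : Fin d => gaussianReal 0 ⟨σ^2, sq_nonneg σ⟩) = 0 := by
  rw [integral_finset_sum _ fun j _ => (mypi_int_eval hσ j).const_mul _]
  refine Finset.sum_eq_zero fun j _ => ?_
  rw [integral_const_mul, mypi_integral_eval hσ j, mul_zero]

lemma myU_re : (fun z : Fin d → ℝ => (c i + ∑ j, a i j * z j) ^ 2)
    = fun z => ((c i) ^ 2 + (2 * c i) * ∑ j, a i j * z j)
        + ∑ j, ∑ k, (a i j * a i k) * (z j * z k) := by
  funext z
  have hS2 : (∑ j, a i j * z j) * (∑ k, a i k * z k)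
      = ∑ j, ∑ k, (a i j * a i k) * (z j * z k) := by
    rw [Finset.sum_mul_sum]
    exact Finset.sum_congr rfl fun j _ => Finset.sum_congr rfl fun k _ => by ring
  rw [← hS2]; ring

include hσ in
lemma myDS_int : Integrable
    (fun z : Fin d → ℝ => ∑ j, ∑ k, (a i j * a i k) * (z j * z k))
    (Measure.pi fun _ : Fin d => gaussianReal 0 ⟨σ^2, sq_nonneg σ⟩) :=
  integrable_finset_sum _ fun j _ => integrable_finset_sum _ fun k _ =>
    (mypi_int_mul hσ j k).const_mul _

include hσ in
lemma myU_int : Integrable (fun z : Fin d → ℝ => (c i + ∑ j, a i j * z j) ^ 2)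
    (Measure.pi fun _ : Fin d => gaussianReal 0 ⟨σ^2, sq_nonneg σ⟩) := by
  rw [myU_re]
  exact ((integrable_const _).add ((myS_int hσ a i).const_mul _)).add (myDS_int hσ a i)

include hσ in
lemma myU_eq : ∫ z, (c i + ∑ j, a i j * z j) ^ 2
    ∂(Measure.pi fun _ : Fin d => gaussianReal 0 ⟨σ^2, sq_nonneg σ⟩)
    = (c i) ^ 2 + σ ^ 2 * ∑ j, a i j ^ 2 := by
  have hg1 : Integrable (fun z : Fin d → ℝ => (c i) ^ 2)
      (Measure.pi fun _ : Fin d => gaussianReal 0 ⟨σ^2, sq_nonneg σ⟩) := integrable_const _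
  have hg2 : Integrable (fun z : Fin d → ℝ => (2 * c i) * ∑ j, a i j * z j)
      (Measure.pi fun _ : Fin d => gaussianReal 0 ⟨σ^2, sq_nonneg σ⟩) :=
    (myS_int hσ a i).const_mul _
  have hg12 : Integrable (fun z : Fin d → ℝ => (c i) ^ 2 + (2 * c i) * ∑ j, a i j * z j)
      (Measure.pi fun _ : Fin d => gaussianReal 0 ⟨σ^2, sq_nonneg σ⟩) := hg1.add hg2
  rw [myU_re,
    integral_add hg12 (myDS_int hσ a i),
    integral_add hg1 hg2,
    integral_const, integral_const_mul, myS_eq hσ a i, mul_zero, add_zero,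
    integral_finset_sum _ (fun j _ => integrable_finset_sum _ fun k _ =>
      (mypi_int_mul hσ j k).const_mul _)]
  rw [Finset.sum_congr rfl (fun j _ => integral_finset_sum _ fun k _ =>
    (mypi_int_mul hσ j k).const_mul _)]
  have hinner : ∀ j : Fin d,
      (∑ k, ∫ z, (a i j * a i k) * (z j * z k)
        ∂(Measure.pi fun _ : Fin d => gaussianReal 0 ⟨σ^2, sq_nonneg σ⟩))
      = a i j ^ 2 * σ ^ 2 := by
    intro j
    have h1 : ∀ k : Fin d, ∫ z, (a i j * a i k) * (z j * z k)
        ∂(Measure.pi fun _ : Fin d => gaussianReal 0 ⟨σ^2, sq_nonneg σ⟩)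
        = if j = k then a i j * a i j * σ ^ 2 else 0 := by
      intro k
      rw [integral_const_mul, mypi_integral_mul hσ j k]
      by_cases h : j = k
      · subst h; simp
      · simp [h]
    rw [Finset.sum_congr rfl fun k _ => h1 k, Finset.sum_ite_eq]
    simp [sq]
  rw [Finset.sum_congr rfl fun j _ => hinner j]
  simp only [probReal_univ, measure_univ, ENNReal.toReal_one, smul_eq_mul, one_mul]
  rw [Finset.mul_sum]
  congr 1
  exact Finset.sum_congr rfl fun j _ => mul_comm _ _

include hσ in
lemma myCS_int : Integrable (fun z : Fin d → ℝ => c i + ∑ j, a i j * z j)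
    (Measure.pi fun _ : Fin d => gaussianReal 0 ⟨σ^2, sq_nonneg σ⟩) :=
  (integrable_const _).add (myS_int hσ a i)

include hσ in
lemma myCS_eq : ∫ z, (c i + ∑ j, a i j * z j)
    ∂(Measure.pi fun _ : Fin d => gaussianReal 0 ⟨σ^2, sq_nonneg σ⟩) = c i := by
  rw [integral_add (integrable_const _) (myS_int hσ a i), integral_const, myS_eq hσ a i]
  simp

lemma myφ_re : (fun q : (Fin d → ℝ) × (Fin d → ℝ) =>
      (c i + (∑ j, a i j * q.1 j) - q.2 i) ^ 2)
    = fun q => ((c i + ∑ j, a i j * q.1 j) ^ 2 + q.2 i * q.2 i)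
        + (-2) * ((c i + ∑ j, a i j * q.1 j) * q.2 i) := by
  funext q; ring

include hσ in
lemma my_key_int : Integrable (fun q : (Fin d → ℝ) × (Fin d → ℝ) =>
      (c i + (∑ j, a i j * q.1 j) - q.2 i) ^ 2)
    ((Measure.pi fun _ : Fin d => gaussianReal 0 ⟨σ^2, sq_nonneg σ⟩).prod
      (Measure.pi fun _ : Fin d => gaussianReal 0 ⟨σ^2, sq_nonneg σ⟩)) := by
  rw [myφ_re]
  exact ((my_int_fst (myU_int hσ a c i)).add (my_int_snd (mypi_int_mul hσ i i))).add
    (((myCS_int hσ a c i).mul_prod (mypi_int_eval hσ i)).const_mul (-2))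

include hσ in
lemma my_key_eq : ∫ q, (c i + (∑ j, a i j * q.1 j) - q.2 i) ^ 2
    ∂((Measure.pi fun _ : Fin d => gaussianReal 0 ⟨σ^2, sq_nonneg σ⟩).prod
      (Measure.pi fun _ : Fin d => gaussianReal 0 ⟨σ^2, sq_nonneg σ⟩))
    = c i ^ 2 + σ ^ 2 * (∑ j, a i j ^ 2) + σ ^ 2 := by
  have hh1 : Integrable (fun q : (Fin d → ℝ) × (Fin d → ℝ) =>
      (c i + ∑ j, a i j * q.1 j) ^ 2)
      ((Measure.pi fun _ : Fin d => gaussianReal 0 ⟨σ^2, sq_nonneg σ⟩).prod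
        (Measure.pi fun _ : Fin d => gaussianReal 0 ⟨σ^2, sq_nonneg σ⟩)) :=
    my_int_fst (myU_int hσ a c i)
  have hh2 : Integrable (fun q : (Fin d → ℝ) × (Fin d → ℝ) => q.2 i * q.2 i)
      ((Measure.pi fun _ : Fin d => gaussianReal 0 ⟨σ^2, sq_nonneg σ⟩).prod
        (Measure.pi fun _ : Fin d => gaussianReal 0 ⟨σ^2, sq_nonneg σ⟩)) :=
    my_int_snd (mypi_int_mul hσ i i)
  have hh12 : Integrable (fun q : (Fin d → ℝ) × (Fin d → ℝ) =>
      (c i + ∑ j, a i j * q.1 j) ^ 2 + q.2 i * q.2 i)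
      ((Measure.pi fun _ : Fin d => gaussianReal 0 ⟨σ^2, sq_nonneg σ⟩).prod
        (Measure.pi fun _ : Fin d => gaussianReal 0 ⟨σ^2, sq_nonneg σ⟩)) := hh1.add hh2
  have hh3 : Integrable (fun q : (Fin d → ℝ) × (Fin d → ℝ) =>
      (-2 : ℝ) * ((c i + ∑ j, a i j * q.1 j) * q.2 i))
      ((Measure.pi fun _ : Fin d => gaussianReal 0 ⟨σ^2, sq_nonneg σ⟩).prod
        (Measure.pi fun _ : Fin d => gaussianReal 0 ⟨σ^2, sq_nonneg σ⟩)) :=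
    ((myCS_int hσ a c i).mul_prod (mypi_int_eval hσ i)).const_mul (-2)
  rw [myφ_re,
    integral_add hh12 hh3,
    integral_add hh1 hh2,
    my_eq_fst (fun z : Fin d → ℝ => (c i + ∑ j, a i j * z j) ^ 2),
    my_eq_snd (fun w : Fin d → ℝ => w i * w i),
    integral_const_mul,
    integral_prod_mul (fun z : Fin d → ℝ => c i + ∑ j, a i j * z j) (fun w : Fin d → ℝ => w i),
    myU_eq hσ a c i, myCS_eq hσ a c i, mypi_integral_mul hσ i i, mypi_integral_eval hσ i]
  simp
end S
end Key

/-- The law of a random vector in `ℝ^d` whose coordinates are independent and each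
distributed `N(0, σ²)`. -/
noncomputable def isoGaussian (d : ℕ) (σ : ℝ) : Measure (EuclideanSpace ℝ (Fin d)) :=
  Measure.map (MeasurableEquiv.toLp 2 (Fin d → ℝ))
    (Measure.pi fun _ : Fin d => gaussianReal 0 ⟨σ ^ 2, sq_nonneg σ⟩)

/-- Expected alignment loss in the Gaussian translation model: if `X = μ + Z` and
`Y = μ + g + Z'` with `Z, Z'` independent and each having i.i.d. `N(0, σ²)` coordinates,
and `M : ℝ^d → ℝ^d` is linear, then
`E[‖X + M X - Y‖²] = ‖M μ - g‖² + σ² ‖I + M‖_F² + d σ²`,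
where `‖I + M‖_F²` is the sum of the squares of all entries of the matrix of `I + M`
in the standard basis. -/
theorem expected_alignment_loss_gaussian_translation_model
    (d : ℕ) (hd : 1 ≤ d) (μv g : EuclideanSpace ℝ (Fin d)) (σ : ℝ) (hσ : 0 < σ)
    (M : EuclideanSpace ℝ (Fin d) →ₗ[ℝ] EuclideanSpace ℝ (Fin d))
    {Ω : Type*} [MeasureSpace Ω] [IsProbabilityMeasure (ℙ : Measure Ω)]
    (Z Z' : Ω → EuclideanSpace ℝ (Fin d))
    (hZmeas : Measurable Z) (hZ'meas : Measurable Z')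
    (hZ : Measure.map Z ℙ = isoGaussian d σ)
    (hZ' : Measure.map Z' ℙ = isoGaussian d σ)
    (hindep : IndepFun Z Z' ℙ) :
    ∫ ω, ‖(μv + Z ω) + M (μv + Z ω) - (μv + g + Z' ω)‖ ^ 2 ∂ℙ
      = ‖M μv - g‖ ^ 2
        + σ ^ 2 * (∑ i : Fin d, ∑ j : Fin d,
            (LinearMap.toMatrix (EuclideanSpace.basisFun (Fin d) ℝ).toBasis
              (EuclideanSpace.basisFun (Fin d) ℝ).toBasis
              (LinearMap.id + M)) i j ^ 2)
        + d * σ ^ 2 := by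
  classical
  set A : EuclideanSpace ℝ (Fin d) →ₗ[ℝ] EuclideanSpace ℝ (Fin d) := LinearMap.id + M with hA
  set a : Matrix (Fin d) (Fin d) ℝ := LinearMap.toMatrix
      (EuclideanSpace.basisFun (Fin d) ℝ).toBasis (EuclideanSpace.basisFun (Fin d) ℝ).toBasis A
    with ha
  have hAc : Continuous A := A.continuous_of_finiteDimensional
  set F : EuclideanSpace ℝ (Fin d) × EuclideanSpace ℝ (Fin d) → ℝ :=
    fun p => ‖(M μv - g) + A p.1 - p.2‖ ^ 2 with hF
  have hFc : Continuous F :=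
    (((continuous_const.add (hAc.comp continuous_fst)).sub continuous_snd).norm).pow 2
  -- norm formula
  have hnorm : ∀ v : EuclideanSpace ℝ (Fin d), ‖v‖ ^ 2 = ∑ i, (v i) ^ 2 := by
    intro v
    rw [EuclideanSpace.norm_eq, Real.sq_sqrt (by positivity)]
    exact Finset.sum_congr rfl fun i _ => by rw [Real.norm_eq_abs, sq_abs]
  -- step 1
  have step1 : ∫ ω, ‖(μv + Z ω) + M (μv + Z ω) - (μv + g + Z' ω)‖ ^ 2 ∂ℙ
      = ∫ ω, F (Z ω, Z' ω) ∂ℙ := by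
    refine integral_congr_ae (ae_of_all _ fun ω => ?_)
    have h : (μv + Z ω) + M (μv + Z ω) - (μv + g + Z' ω) = (M μv - g) + A (Z ω) - Z' ω := by
      simp only [hA, LinearMap.add_apply, LinearMap.id_apply, map_add]
      abel
    rw [hF]; dsimp only; rw [h]
  -- step 2
  have hpair : Measure.map (fun ω => (Z ω, Z' ω)) ℙ
      = (isoGaussian d σ).prod (isoGaussian d σ) := by
    nth_rewrite 1 [← hZ]
    rw [← hZ']
    exact (indepFun_iff_map_prod_eq_prod_map_map hZmeas.aemeasurable
      hZ'meas.aemeasurable).mp hindep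
  have step2 : ∫ ω, F (Z ω, Z' ω) ∂ℙ
      = ∫ p, F p ∂((isoGaussian d σ).prod (isoGaussian d σ)) := by
    rw [← hpair,
      integral_map (hZmeas.prodMk hZ'meas).aemeasurable hFc.aestronglyMeasurable]
  -- step 3
  have step3 : ∫ p, F p ∂((isoGaussian d σ).prod (isoGaussian d σ))
      = ∫ q : (Fin d → ℝ) × (Fin d → ℝ),
          F ((MeasurableEquiv.toLp 2 (Fin d → ℝ)) q.1,
             (MeasurableEquiv.toLp 2 (Fin d → ℝ)) q.2)
          ∂((Measure.pi fun _ : Fin d => gaussianReal 0 ⟨σ^2, sq_nonneg σ⟩).prod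
            (Measure.pi fun _ : Fin d => gaussianReal 0 ⟨σ^2, sq_nonneg σ⟩)) := by
    rw [show isoGaussian d σ = Measure.map (MeasurableEquiv.toLp 2 (Fin d → ℝ))
        (Measure.pi fun _ : Fin d => gaussianReal 0 ⟨σ ^ 2, sq_nonneg σ⟩) from rfl]
    rw [Measure.map_prod_map _ _ (MeasurableEquiv.measurable _) (MeasurableEquiv.measurable _)]
    rw [integral_map ((MeasurableEquiv.measurable _).prodMap
      (MeasurableEquiv.measurable _)).aemeasurable hFc.aestronglyMeasurable]
    rfl
  -- coordinates
  have hcoord : ∀ (z : Fin d → ℝ) (i : Fin d),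
      (A ((MeasurableEquiv.toLp 2 (Fin d → ℝ)) z)) i = ∑ j, a i j * z j := by
    intro z i
    have h := congrFun (LinearMap.toMatrix_mulVec_repr
      (EuclideanSpace.basisFun (Fin d) ℝ).toBasis (EuclideanSpace.basisFun (Fin d) ℝ).toBasis
      A ((MeasurableEquiv.toLp 2 (Fin d → ℝ)) z)) i
    simpa [Matrix.mulVec, dotProduct, ha, OrthonormalBasis.coe_toBasis_repr_apply,
      EuclideanSpace.basisFun_repr, MeasurableEquiv.coe_toLp,
      PiLp.toLp_apply] using h.symm
  -- step 4
  have step4 : ∫ q : (Fin d → ℝ) × (Fin d → ℝ),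
          F ((MeasurableEquiv.toLp 2 (Fin d → ℝ)) q.1,
             (MeasurableEquiv.toLp 2 (Fin d → ℝ)) q.2)
          ∂((Measure.pi fun _ : Fin d => gaussianReal 0 ⟨σ^2, sq_nonneg σ⟩).prod
            (Measure.pi fun _ : Fin d => gaussianReal 0 ⟨σ^2, sq_nonneg σ⟩))
      = ∫ q : (Fin d → ℝ) × (Fin d → ℝ),
          (∑ i, ((M μv - g) i + (∑ j, a i j * q.1 j) - q.2 i) ^ 2)
          ∂((Measure.pi fun _ : Fin d => gaussianReal 0 ⟨σ^2, sq_nonneg σ⟩).prod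
            (Measure.pi fun _ : Fin d => gaussianReal 0 ⟨σ^2, sq_nonneg σ⟩)) := by
    refine integral_congr_ae (ae_of_all _ fun q => ?_)
    rw [hF]
    dsimp only
    rw [hnorm]
    refine Finset.sum_congr rfl fun i _ => ?_
    congr 1
    rw [PiLp.sub_apply, PiLp.add_apply, hcoord q.1 i]
    congr 1
  rw [step1, step2, step3, step4]
  rw [integral_finset_sum _ fun i _ => my_key_int hσ a (M μv - g) i]
  rw [Finset.sum_congr rfl fun i _ => my_key_eq hσ a (M μv - g) i]
  rw [Finset.sum_add_distrib, Finset.sum_add_distrib, ← hnorm (M μv - g), ← Finset.mul_sum]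
  simp [Finset.sum_const, Finset.card_univ, nsmul_eq_mul]
end
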